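/- arXiv:2111.08287 — 3 statements merged into one kernel-verified Lean document; each statement's English description precedes it below -/
import Mathlib

section
/- The enhanced Brauer algebra decomposes as a direct sum B(ε,n,r) = ⊕_{l=0}^{r} B(ε,n,r)_l of its subalgebras B(ε,n,r)_l, where B(ε,n,r)_l is the component acting on the subspace V̲_l^{⊗r} of the enhanced tensor space and annihilating V̲_k^{⊗r} for k ≠ l. -/
open Finset Matrix

namespace EnhancedBrauer

/- Coordinates: `V = ℂⁿ` with a nondegenerate bilinear form of matrix `Q`; the enhanced space
`V̲ = V ⊕ ℂη` is `ℂ^{n+1}`, the index `Fin.last n` playing the role of `η`.  The enhanced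
tensor power `V̲^{⊗r}` is `(Fin r → Fin (n+1)) → ℂ`, and its linear endomorphisms are
matrices indexed by `Fin r → Fin (n+1)` (acting by `mulVec`/`mulVecLin`).  For
`I ⊆ {1,…,r}`, the summand `V̲_I^{⊗r}` is spanned by the basis indices `k` with
`k i ≠ Fin.last n` exactly for `i ∈ I`. -/

/-- Coordinate matrix of the diagonal action of `g` on the `m`-th tensor power of `ℂ^N`. -/
noncomputable def PhiMat {N m : ℕ} (g : Matrix (Fin N) (Fin N) ℂ) :
    Matrix (Fin m → Fin N) (Fin m → Fin N) ℂ :=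
  fun k q => ∏ i, g (k i) (q i)

/-- Coordinate matrix of the place-permutation action of `s ∈ 𝔖_m`. -/
noncomputable def PsiMat {N m : ℕ} (s : Equiv.Perm (Fin m)) :
    Matrix (Fin m → Fin N) (Fin m → Fin N) ℂ :=
  fun k q => if q = k ∘ s then 1 else 0

/-- The index `k` has support exactly `I` (i.e. the corresponding basis vector of the
enhanced tensor power lies in `V̲_I^{⊗r}`). -/
def isSupp {n r : ℕ} (I : Finset (Fin r)) (k : Fin r → Fin (n + 1)) : Prop :=
  ∀ i, i ∈ I ↔ k i ≠ Fin.last n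

/-- The number of tensor factors of the basis index `k` coming from `V` (and not `η`). -/
def levelOf {n r : ℕ} (k : Fin r → Fin (n + 1)) : ℕ :=
  (Finset.univ.filter fun i => k i ≠ Fin.last n).card

/-- The basis index of `V̲_I^{⊗r}` whose `V`-entries are given by `a : Fin l → Fin n`,
arranged along the increasing enumeration of `I`. -/
noncomputable def emb {n r l : ℕ} (I : Finset (Fin r)) (hI : I.card = l)
    (a : Fin l → Fin n) : Fin r → Fin (n + 1) :=
  fun i => if h : i ∈ I then Fin.castSucc (a ((I.orderIsoOfFin hI).symm ⟨i, h⟩)) else Fin.last n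

/-- The operator `σ^I` acting as `σ = A` on `V̲_I^{⊗r} ≅ V^{⊗l}` and as `0` on every other
summand `V̲_K^{⊗r}`. -/
noncomputable def opMat {n r l : ℕ} (I : Finset (Fin r)) (hI : I.card = l)
    (A : Matrix (Fin l → Fin n) (Fin l → Fin n) ℂ) :
    Matrix (Fin r → Fin (n + 1)) (Fin r → Fin (n + 1)) ℂ :=
  fun k q => ∑ a : Fin l → Fin n, ∑ b : Fin l → Fin n,
    if k = emb I hI a ∧ q = emb I hI b then A a b else 0

/-- The operator `E_{I,J}`: the order-preserving place permutation carrying `V̲_J^{⊗r}`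
onto `V̲_I^{⊗r}`, extended by zero on all other summands. -/
noncomputable def EMat {n r l : ℕ} (I J : Finset (Fin r)) (hI : I.card = l)
    (hJ : J.card = l) :
    Matrix (Fin r → Fin (n + 1)) (Fin r → Fin (n + 1)) ℂ :=
  fun k q => ∑ a : Fin l → Fin n, if k = emb I hI a ∧ q = emb J hJ a then 1 else 0

/-- The Brauer algebra `B_l(εn) = End_G(V^{⊗l})`: all matrices commuting with the diagonal
action of the isometry group `G` of the form with matrix `Q`. -/
def BrauerSet (n l : ℕ) (Q : Matrix (Fin n) (Fin n) ℂ) :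
    Set (Matrix (Fin l → Fin n) (Fin l → Fin n) ℂ) :=
  {A | ∀ g : Matrix (Fin n) (Fin n) ℂ, gᵀ * Q * g = Q → PhiMat g * A = A * PhiMat g}

/-- The restriction `Ψ̲|_l(s)` of the place permutation action to the level-`l` summand
`V̲_l^{⊗r}`, extended by zero on the other levels. -/
noncomputable def PsiLevel {n r : ℕ} (l : ℕ) (s : Equiv.Perm (Fin r)) :
    Matrix (Fin r → Fin (n + 1)) (Fin r → Fin (n + 1)) ℂ :=
  fun k q => if levelOf (n := n) k = l ∧ q = k ∘ s then 1 else 0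

/-- The enhanced Brauer algebra `B(ε,n,r)`: the (non-unital) subalgebra of
`End_ℂ(V̲^{⊗r})` generated by `Ψ(𝔖_r)` and all `σ^I` with `σ ∈ B_{#I}(εn)`. -/
noncomputable def enhancedBrauer (n r : ℕ) (Q : Matrix (Fin n) (Fin n) ℂ) :
    NonUnitalSubalgebra ℂ (Matrix (Fin r → Fin (n + 1)) (Fin r → Fin (n + 1)) ℂ) :=
  NonUnitalAlgebra.adjoin ℂ
    ({M | ∃ s : Equiv.Perm (Fin r), M = PsiMat s} ∪
      {M | ∃ I : Finset (Fin r), ∃ A ∈ BrauerSet n I.card Q, M = opMat I rfl A})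

/-- The level-`l` piece `B(ε,n,r)_l`: the (non-unital) subalgebra of `End_ℂ(V̲^{⊗r})`
generated by `Ψ̲|_l(𝔖_r)` and all `σ^I` with `#I = l`, `σ ∈ B_l(εn)`; its elements act on
`V̲_l^{⊗r}` and annihilate `V̲_k^{⊗r}` for `k ≠ l`. -/
noncomputable def enhancedBrauerLevel (n r : ℕ) (Q : Matrix (Fin n) (Fin n) ℂ) (l : ℕ) :
    NonUnitalSubalgebra ℂ (Matrix (Fin r → Fin (n + 1)) (Fin r → Fin (n + 1)) ℂ) :=
  NonUnitalAlgebra.adjoin ℂ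
    ({M | ∃ s : Equiv.Perm (Fin r), M = PsiLevel l s} ∪
      {M | ∃ I : Finset (Fin r), ∃ hI : I.card = l, ∃ A ∈ BrauerSet n l Q,
        M = opMat I hI A})

section Helpers

variable {n r l : ℕ}

lemma levelOf_le (k : Fin r → Fin (n + 1)) : levelOf k ≤ r := by
  classical
  calc levelOf k ≤ (Finset.univ : Finset (Fin r)).card := Finset.card_filter_le _ _
  _ = r := by simp

lemma levelOf_comp_perm (k : Fin r → Fin (n + 1)) (s : Equiv.Perm (Fin r)) :
    levelOf (n := n) (k ∘ s) = levelOf k := by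
  classical
  unfold levelOf
  apply Finset.card_bij (fun i _ => s i)
  · intro a ha; simp only [Finset.mem_filter, Finset.mem_univ, true_and] at ha ⊢; exact ha
  · intro a ha b hb h; exact s.injective h
  · intro b hb
    refine ⟨s.symm b, ?_, by simp⟩
    simp only [Finset.mem_filter, Finset.mem_univ, true_and, Function.comp] at hb ⊢
    simpa using hb

lemma suppOf_emb (I : Finset (Fin r)) (hI : I.card = l) (a : Fin l → Fin n) :
    (Finset.univ.filter fun i => emb I hI a i ≠ Fin.last n) = I := by
  classical
  ext i
  simp only [Finset.mem_filter, Finset.mem_univ, true_and, emb]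
  by_cases h : i ∈ I
  · simp [h, (Fin.castSucc_lt_last _).ne]
  · simp [h]

lemma levelOf_emb (I : Finset (Fin r)) (hI : I.card = l) (a : Fin l → Fin n) :
    levelOf (emb I hI a) = l := by
  rw [levelOf, suppOf_emb, hI]

lemma emb_injective (I : Finset (Fin r)) (hI : I.card = l) :
    Function.Injective (emb (n := n) I hI) := by
  intro a b h
  funext j
  have hmem : ((I.orderIsoOfFin hI j : {x // x ∈ I}) : Fin r) ∈ I := (I.orderIsoOfFin hI j).2
  have := congrFun h ((I.orderIsoOfFin hI j : {x // x ∈ I}) : Fin r)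
  rw [emb, emb, dif_pos hmem, dif_pos hmem] at this
  have hsymm : (I.orderIsoOfFin hI).symm ⟨((I.orderIsoOfFin hI j : {x // x ∈ I}) : Fin r), hmem⟩ = j := by
    have heq : (⟨((I.orderIsoOfFin hI j : {x // x ∈ I}) : Fin r), hmem⟩ : {x // x ∈ I})
        = I.orderIsoOfFin hI j := Subtype.ext rfl
    rw [heq, OrderIso.symm_apply_apply]
  rw [hsymm] at this
  exact Fin.castSucc_injective _ this

lemma exists_emb (k : Fin r → Fin (n + 1)) (I : Finset (Fin r)) (hI : I.card = l)
    (hk : (Finset.univ.filter fun i => k i ≠ Fin.last n) = I) :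
    ∃ a : Fin l → Fin n, k = emb I hI a := by
  classical
  have hmem : ∀ i, i ∈ I ↔ k i ≠ Fin.last n := by
    intro i; rw [← hk]; simp
  refine ⟨fun j => Fin.castPred (k ((I.orderIsoOfFin hI j : {x // x ∈ I}) : Fin r))
    ((hmem _).mp (I.orderIsoOfFin hI j).2), ?_⟩
  funext i
  rw [emb]
  by_cases h : i ∈ I
  · rw [dif_pos h]
    have : ((I.orderIsoOfFin hI ((I.orderIsoOfFin hI).symm ⟨i, h⟩) : {x // x ∈ I}) : Fin r) = i := by
      simp
    simp only [this, Fin.castSucc_castPred]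
  · rw [dif_neg h]
    by_contra hne
    exact h ((hmem i).mpr hne)

/-- The projection onto the level-`l` summand. -/
noncomputable def projMat (n r l : ℕ) :
    Matrix (Fin r → Fin (n + 1)) (Fin r → Fin (n + 1)) ℂ :=
  fun k q => if k = q ∧ levelOf (n := n) k = l then 1 else 0

lemma opMat_one_apply (I : Finset (Fin r)) (k q : Fin r → Fin (n + 1)) :
    opMat (n := n) I rfl 1 k q =
      if k = q ∧ (Finset.univ.filter fun i => k i ≠ Fin.last n) = I then 1 else 0 := by
  classical
  rw [opMat]
  have step : ∀ a : Fin I.card → Fin n,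
      (∑ b : Fin I.card → Fin n,
        if k = emb I rfl a ∧ q = emb I rfl b then (1 : Matrix (Fin I.card → Fin n) (Fin I.card → Fin n) ℂ) a b else 0)
      = if k = emb I rfl a ∧ q = emb I rfl a then 1 else 0 := by
    intro a
    have : ∀ b, (if k = emb I rfl a ∧ q = emb I rfl b then (1 : Matrix (Fin I.card → Fin n) (Fin I.card → Fin n) ℂ) a b else 0)
        = if b = a then (if k = emb I rfl a ∧ q = emb I rfl b then (1:ℂ) else 0) else 0 := by
      intro b
      by_cases hb : b = a
      · subst hb; simp [Matrix.one_apply]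
      · simp only [Matrix.one_apply, if_neg hb]
        by_cases hc : k = emb I rfl a ∧ q = emb I rfl b
        · rw [if_pos hc, if_neg (fun h : a = b => hb h.symm)]
        · rw [if_neg hc]
    rw [Finset.sum_congr rfl fun b _ => this b, Finset.sum_ite_eq' Finset.univ a]
    simp
  rw [Finset.sum_congr rfl fun a _ => step a]
  by_cases h : k = q ∧ (Finset.univ.filter fun i => k i ≠ Fin.last n) = I
  · obtain ⟨a, ha⟩ := exists_emb k I rfl h.2
    have : ∀ a' : Fin I.card → Fin n,
        (if k = emb I rfl a' ∧ q = emb I rfl a' then (1:ℂ) else 0) = if a' = a then 1 else 0 := by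
      intro a'
      by_cases ha' : a' = a
      · subst ha'; simp [← ha, ← h.1]
      · have : ¬(k = emb I rfl a' ∧ q = emb I rfl a') := by
          rintro ⟨h1, -⟩
          exact ha' (emb_injective I rfl (h1 ▸ ha).symm).symm
        simp [this, ha']
    rw [Finset.sum_congr rfl fun a' _ => this a', Finset.sum_ite_eq' Finset.univ a,
      if_pos (Finset.mem_univ a), if_pos h]
  · rw [if_neg h]
    apply Finset.sum_eq_zero
    intro a _
    rw [if_neg]
    rintro ⟨h1, h2⟩
    exact h ⟨h1.trans h2.symm, h1 ▸ suppOf_emb I rfl a⟩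

lemma sum_opMat_one (l : ℕ) :
    (∑ I ∈ Finset.univ.filter (fun I : Finset (Fin r) => I.card = l),
      opMat (n := n) I rfl 1) = projMat n r l := by
  classical
  funext k q
  rw [Matrix.sum_apply]
  have : ∀ I ∈ Finset.univ.filter (fun I : Finset (Fin r) => I.card = l),
      opMat (n := n) I rfl 1 k q =
        if I = (Finset.univ.filter fun i => k i ≠ Fin.last n) then
          (if k = q then (1:ℂ) else 0) else 0 := by
    intro I _
    rw [opMat_one_apply]
    by_cases h1 : I = (Finset.univ.filter fun i => k i ≠ Fin.last n)
    · simp [h1, and_comm]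
    · rw [if_neg, if_neg h1]
      rintro ⟨-, h2⟩; exact h1 h2.symm
  rw [Finset.sum_congr rfl this, Finset.sum_ite_eq' _ _]
  rw [projMat]
  by_cases hl : levelOf (n := n) k = l
  · have : (Finset.univ.filter fun i => k i ≠ Fin.last n) ∈
        Finset.univ.filter (fun I : Finset (Fin r) => I.card = l) := by
      simp only [Finset.mem_filter, Finset.mem_univ, true_and]
      exact hl
    rw [if_pos this]
    simp [hl]
  · have : (Finset.univ.filter fun i => k i ≠ Fin.last n) ∉
        Finset.univ.filter (fun I : Finset (Fin r) => I.card = l) := by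
      simp only [Finset.mem_filter, Finset.mem_univ, true_and]
      exact hl
    rw [if_neg this]
    simp [hl]

lemma projMat_mul_psi (l : ℕ) (s : Equiv.Perm (Fin r)) :
    projMat n r l * PsiMat s = PsiLevel l s := by
  classical
  funext k q
  show ∑ x, projMat n r l k x * PsiMat s x q = _
  rw [Finset.sum_eq_single k]
  · rw [projMat, PsiMat, PsiLevel]
    by_cases hl : levelOf (n := n) k = l <;> simp [hl]
  · intro x _ hx
    rw [projMat, if_neg, zero_mul]
    rintro ⟨h1, -⟩; exact hx h1.symm
  · simp

lemma psi_eq_sum (s : Equiv.Perm (Fin r)) :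
    PsiMat (N := n + 1) s = ∑ l ∈ Finset.range (r + 1), PsiLevel l s := by
  classical
  funext k q
  rw [Matrix.sum_apply]
  have : ∀ l ∈ Finset.range (r + 1),
      PsiLevel (n := n) l s k q = if l = levelOf (n := n) k then (if q = k ∘ s then (1:ℂ) else 0) else 0 := by
    intro l _
    rw [PsiLevel]
    by_cases h : l = levelOf (n := n) k
    · simp [h, eq_comm]
    · rw [if_neg, if_neg h]; rintro ⟨h1, -⟩; exact h h1.symm
  rw [Finset.sum_congr rfl this, Finset.sum_ite_eq' _ _]
  rw [if_pos (Finset.mem_range.mpr (Nat.lt_succ_of_le (levelOf_le k)))]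
  rfl

lemma one_mem_brauerSet (n l : ℕ) (Q : Matrix (Fin n) (Fin n) ℂ) :
    (1 : Matrix (Fin l → Fin n) (Fin l → Fin n) ℂ) ∈ BrauerSet n l Q := by
  intro g _
  rw [mul_one, one_mul]

/-- Matrices supported on the level-`l` diagonal block. -/
noncomputable def blockSub (n r l : ℕ) :
    Submodule ℂ (Matrix (Fin r → Fin (n + 1)) (Fin r → Fin (n + 1)) ℂ) where
  carrier := {M | ∀ k q, ¬(levelOf (n := n) k = l ∧ levelOf (n := n) q = l) → M k q = 0}
  add_mem' := by
    intro a b ha hb k q h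
    show a k q + b k q = 0
    rw [ha k q h, hb k q h, add_zero]
  zero_mem' := by intro k q h; rfl
  smul_mem' := by
    intro c a ha k q h
    show c * a k q = 0
    rw [ha k q h, mul_zero]

noncomputable def blockAlg (n r l : ℕ) :
    NonUnitalSubalgebra ℂ (Matrix (Fin r → Fin (n + 1)) (Fin r → Fin (n + 1)) ℂ) :=
  { blockSub n r l with
    mul_mem' := by
      intro a b ha hb k q h
      show ∑ x, a k x * b x q = 0
      apply Finset.sum_eq_zero
      intro x _
      by_cases hkx : levelOf (n := n) k = l ∧ levelOf (n := n) x = l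
      · have hx : ¬(levelOf (n := n) x = l ∧ levelOf (n := n) q = l) := by
          rintro ⟨-, h2⟩; exact h ⟨hkx.1, h2⟩
        rw [hb x q hx, mul_zero]
      · rw [ha k x hkx, zero_mul] }

lemma gen_subset_block (Q : Matrix (Fin n) (Fin n) ℂ) (l : ℕ) :
    ({M | ∃ s : Equiv.Perm (Fin r), M = PsiLevel l s} ∪
      {M | ∃ I : Finset (Fin r), ∃ hI : I.card = l, ∃ A ∈ BrauerSet n l Q,
        M = opMat I hI A}) ⊆ blockAlg n r l := by
  rintro M (⟨s, rfl⟩ | ⟨I, hI, A, hA, rfl⟩)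
  · intro k q h
    rw [PsiLevel, if_neg]
    rintro ⟨h1, h2⟩
    exact h ⟨h1, by rw [h2, levelOf_comp_perm, h1]⟩
  · intro k q h
    rw [opMat]
    apply Finset.sum_eq_zero; intro a _
    apply Finset.sum_eq_zero; intro b _
    rw [if_neg]
    rintro ⟨h1, h2⟩
    exact h ⟨by rw [h1, levelOf_emb], by rw [h2, levelOf_emb]⟩

lemma level_le_block (Q : Matrix (Fin n) (Fin n) ℂ) (l : ℕ) :
    (enhancedBrauerLevel n r Q l).toSubmodule ≤ blockSub n r l := by
  intro x hx
  exact NonUnitalAlgebra.adjoin_le (gen_subset_block Q l) hx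

end Helpers


noncomputable def coBlock (n r l : ℕ) :
    Submodule ℂ (Matrix (Fin r → Fin (n + 1)) (Fin r → Fin (n + 1)) ℂ) where
  carrier := {M | ∀ k q, levelOf (n := n) k = l → M k q = 0}
  add_mem' := by
    intro a b ha hb k q h
    show a k q + b k q = 0
    rw [ha k q h, hb k q h, add_zero]
  zero_mem' := by intro k q h; rfl
  smul_mem' := by
    intro c a ha k q h
    show c * a k q = 0
    rw [ha k q h, mul_zero]

lemma block_le_coBlock {n r : ℕ} {m l : ℕ} (h : m ≠ l) :
    blockSub n r m ≤ coBlock n r l := by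
  intro M hM k q hk
  apply hM k q
  rintro ⟨h1, -⟩
  exact h (h1.symm.trans hk)

lemma disjoint_block_coBlock (n r l : ℕ) :
    Disjoint (blockSub n r l) (coBlock n r l) := by
  rw [Submodule.disjoint_def]
  intro M h1 h2
  funext k q
  by_cases hk : levelOf (n := n) k = l
  · exact h2 k q hk
  · exact h1 k q (fun hc => hk hc.1)

lemma level_le_enhanced {n r : ℕ} (Q : Matrix (Fin n) (Fin n) ℂ) (m : ℕ) :
    enhancedBrauerLevel n r Q m ≤ enhancedBrauer n r Q := by
  apply NonUnitalAlgebra.adjoin_le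
  rintro M (⟨s, rfl⟩ | ⟨I, hI, A, hA, rfl⟩)
  · rw [← projMat_mul_psi, ← sum_opMat_one]
    refine mul_mem (sum_mem fun I hI => ?_)
      (NonUnitalAlgebra.subset_adjoin ℂ (Or.inl ⟨s, rfl⟩))
    exact NonUnitalAlgebra.subset_adjoin ℂ
      (Or.inr ⟨I, 1, one_mem_brauerSet n I.card Q, rfl⟩)
  · subst hI
    exact NonUnitalAlgebra.subset_adjoin ℂ (Or.inr ⟨I, A, hA, rfl⟩)

/-- The enhanced Brauer algebra decomposes as the internal direct sum
`B(ε,n,r) = ⊕_{l=0}^{r} B(ε,n,r)_l` of its level subalgebras. -/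
theorem enhancedBrauer_direct_sum (n r : ℕ) (Q : Matrix (Fin n) (Fin n) ℂ) :
    (enhancedBrauer n r Q).toSubmodule =
        (⨆ l : Fin (r + 1), (enhancedBrauerLevel n r Q l).toSubmodule) ∧
      iSupIndep (fun l : Fin (r + 1) => (enhancedBrauerLevel n r Q l).toSubmodule) := by
  classical
  constructor
  · apply le_antisymm
    · -- enhancedBrauer ≤ sup of levels
      set S := ⨆ l : Fin (r + 1), (enhancedBrauerLevel n r Q l).toSubmodule with hS
      have mulc : ∀ a ∈ S, ∀ b ∈ S, a * b ∈ S := by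
        intro a ha
        refine Submodule.iSup_induction (motive := fun a => ∀ b ∈ S, a * b ∈ S) _ ha ?_ ?_ ?_
        · intro i x hx b hb
          refine Submodule.iSup_induction (motive := fun b => x * b ∈ S) _ hb ?_ ?_ ?_
          · intro j y hy
            by_cases hij : i = j
            · subst hij
              have hx' : x ∈ enhancedBrauerLevel n r Q (i : ℕ) := hx
              have hy' : y ∈ enhancedBrauerLevel n r Q (i : ℕ) := hy
              have hmul : x * y ∈ enhancedBrauerLevel n r Q (i : ℕ) := mul_mem hx' hy'
              exact Submodule.mem_iSup_of_mem i hmul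
            · have hxy : x * y = 0 := by
                have hxB := level_le_block Q (i : ℕ) hx
                have hyB := level_le_block Q (j : ℕ) hy
                funext k q
                show ∑ t, x k t * y t q = 0
                apply Finset.sum_eq_zero
                intro t _
                by_cases hkt : levelOf (n := n) k = (i : ℕ) ∧ levelOf (n := n) t = (i : ℕ)
                · have : ¬(levelOf (n := n) t = (j : ℕ) ∧ levelOf (n := n) q = (j : ℕ)) := by
                    rintro ⟨h1, -⟩
                    exact hij (Fin.val_injective (hkt.2.symm.trans h1))
                  rw [hyB t q this, mul_zero]
                · rw [hxB k t hkt, zero_mul]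
              rw [hxy]
              exact zero_mem S
          · show x * 0 ∈ S; rw [mul_zero]; exact zero_mem S
          · intro y z hy hz; show x * (y + z) ∈ S; rw [mul_add]; exact add_mem hy hz
        · intro b hb; show (0 : Matrix _ _ ℂ) * b ∈ S; rw [zero_mul]; exact zero_mem S
        · intro x y hx hy b hb
          show (x + y) * b ∈ S
          rw [add_mul]; exact add_mem (hx b hb) (hy b hb)
      have hadj : enhancedBrauer n r Q ≤
          ({ S with mul_mem' := fun ha hb => mulc _ ha _ hb } :
            NonUnitalSubalgebra ℂ (Matrix (Fin r → Fin (n + 1)) (Fin r → Fin (n + 1)) ℂ)) := by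
        apply NonUnitalAlgebra.adjoin_le
        rintro M (⟨s, rfl⟩ | ⟨I, A, hA, rfl⟩)
        · show PsiMat s ∈ S
          rw [psi_eq_sum]
          apply sum_mem
          intro l hl
          have hl' : l < r + 1 := Finset.mem_range.mp hl
          exact Submodule.mem_iSup_of_mem (⟨l, hl'⟩ : Fin (r + 1))
            (NonUnitalAlgebra.subset_adjoin ℂ (Or.inl ⟨s, rfl⟩))
        · show opMat I rfl A ∈ S
          have hcard : I.card < r + 1 :=
            Nat.lt_succ_of_le (le_trans (Finset.card_le_univ I) (by simp))
          exact Submodule.mem_iSup_of_mem (⟨I.card, hcard⟩ : Fin (r + 1))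
            (NonUnitalAlgebra.subset_adjoin ℂ (Or.inr ⟨I, rfl, A, hA, rfl⟩))
      exact fun x hx => hadj hx
    · apply iSup_le
      intro l x hx
      exact level_le_enhanced Q (l : ℕ) hx
  · intro i
    refine Disjoint.mono (level_le_block Q (i : ℕ)) ?_ (disjoint_block_coBlock n r (i : ℕ))
    refine iSup_le fun j => iSup_le fun hj => ?_
    exact le_trans (level_le_block Q (j : ℕ))
      (block_le_coBlock fun h => hj (Fin.val_injective h))

end EnhancedBrauer
end

section
/- Let G be a closed subgroup of GL(V) and G̲ = G ×_ρ V the enhanced group acting on V̲^{⊗r}. For any f ∈ End_{G̲}(V̲^{⊗r}) and 0 ≤ l ≤ r, we have f(V̲_l^{⊗r}) ⊆ W_l, where W_l := ⊕_{t=l}^{r} V̲_t^{⊗r}. In particular every G̲-endomorphism of V̲^{⊗r} preserves the filtration W_0 ⊇ W_1 ⊇ ... ⊇ W_r. -/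
open Finset Matrix

namespace EnhancedBrauer

/-- The matrix on `V̲ = V ⊕ ℂη = ℂ^{n+1}` of the element `(g, v)` of the enhanced group
`G̲ = G ×_ρ V`: it acts as `g` on `V` and sends `η` to `v + η`. -/
noncomputable def encMat {n : ℕ} (g : Matrix (Fin n) (Fin n) ℂ) (v : Fin n → ℂ) :
    Matrix (Fin (n + 1)) (Fin (n + 1)) ℂ :=
  fun i j =>
    if hi : (i : ℕ) < n then
      (if hj : (j : ℕ) < n then g ⟨i, hi⟩ ⟨j, hj⟩ else v ⟨i, hi⟩)
    else (if (j : ℕ) < n then 0 else 1)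

/-- The matrix on `V̲` of a torus element `c ∈ 𝔾_m`: identity on `V` and `c` on `η`. -/
noncomputable def torMat (n : ℕ) (c : ℂ) : Matrix (Fin (n + 1)) (Fin (n + 1)) ℂ :=
  Matrix.diagonal (fun i => if (i : ℕ) < n then 1 else c)

section Core

variable {n r : ℕ}

/-- abbreviation for the index type -/
local notation "K" => (Fin r → Fin (n+1))

/-- per-value weight: +1 on `a`-slots, −1 on `η`-slots -/
def phiw (a : Fin n) (x : Fin (n+1)) : ℤ :=
  (if x = Fin.castSucc a then 1 else 0) - (if x = Fin.last n then 1 else 0)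

/-- `a`-weight of an index -/
def wt (a : Fin n) (k : K) : ℤ := ∑ j, phiw a (k j)

lemma castSucc_ne_last (a : Fin n) : (Fin.castSucc a) ≠ Fin.last n :=
  (Fin.castSucc_lt_last a).ne

lemma phiw_castSucc (a : Fin n) : phiw a (Fin.castSucc a) = 1 := by
  simp [phiw, castSucc_ne_last a]

lemma phiw_last (a : Fin n) : phiw a (Fin.last n) = -1 := by
  simp [phiw, (castSucc_ne_last a).symm]

lemma wt_update (a : Fin n) (q : K) (i : Fin r) (v : Fin (n+1)) :
    wt a (Function.update q i v) = wt a q - phiw a (q i) + phiw a v := by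
  unfold wt
  have h1 : ∀ j, phiw a (Function.update q i v j)
      = Function.update (fun j => phiw a (q j)) i (phiw a v) j := by
    intro j
    by_cases h : j = i
    · subst h; simp
    · simp [Function.update_of_ne h]
  rw [Finset.sum_congr rfl fun j _ => h1 j]
  rw [Finset.sum_update_of_mem (Finset.mem_univ i)]
  rw [← Finset.add_sum_erase _ (fun j => phiw a (q j)) (Finset.mem_univ i),
    Finset.sdiff_singleton_eq_erase]
  ring


/-- compatibility of `k` with `q` for raising by `a`: `k` agrees with `q` on the support of
`q`, and on `η`-slots of `q` it is `η` or `a`. -/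
def chi (a : Fin n) (k q : K) : Prop :=
  ∀ i, (q i = Fin.last n → k i = Fin.last n ∨ k i = Fin.castSucc a)
    ∧ (q i ≠ Fin.last n → k i = q i)

instance (a : Fin n) (k q : K) : Decidable (chi a k q) := by
  unfold chi; infer_instance

/-- the number of `η`-slots of `q` filled by `a` in `k` -/
def mm (a : Fin n) (k q : K) : ℕ :=
  (Finset.univ.filter fun i => q i = Fin.last n ∧ k i = Fin.castSucc a).card

/-- raising operator: fill one `η`-slot with `a` -/
noncomputable def Ym (a : Fin n) : Matrix K K ℂ :=
  fun k q => if chi a k q ∧ mm a k q = 1 then 1 else 0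

lemma Ym_eq_sum (a : Fin n) (k q : K) :
    Ym a k q = ∑ i, if q i = Fin.last n ∧ k = Function.update q i (Fin.castSucc a)
      then (1:ℂ) else 0 := by
  rw [Finset.sum_boole]
  unfold Ym
  by_cases h : chi a k q ∧ mm a k q = 1
  · obtain ⟨hchi, hmm⟩ := h
    obtain ⟨i0, hi0⟩ := Finset.card_eq_one.mp hmm
    have hi0mem : q i0 = Fin.last n ∧ k i0 = Fin.castSucc a := by
      have : i0 ∈ Finset.univ.filter
          (fun i => q i = Fin.last n ∧ k i = Fin.castSucc a) := by rw [hi0]; simp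
      simpa using this
    have hk : k = Function.update q i0 (Fin.castSucc a) := by
      funext j
      by_cases hj : j = i0
      · subst hj; simp [hi0mem.2]
      · rw [Function.update_of_ne hj]
        by_cases hq : q j = Fin.last n
        · rcases (hchi j).1 hq with h' | h'
          · rw [h', hq]
          · exfalso
            have hmem : j ∈ Finset.univ.filter
                (fun i => q i = Fin.last n ∧ k i = Fin.castSucc a) := by
              simp [hq, h']
            rw [hi0] at hmem
            exact hj (Finset.mem_singleton.mp hmem)
        · exact (hchi j).2 hq
    have hset : (Finset.univ.filter fun i => q i = Fin.last n ∧
        k = Function.update q i (Fin.castSucc a)) = {i0} := by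
      apply Finset.eq_singleton_iff_unique_mem.mpr
      constructor
      · simp only [Finset.mem_filter, Finset.mem_univ, true_and]
        exact ⟨hi0mem.1, hk⟩
      · intro j hj
        simp only [Finset.mem_filter, Finset.mem_univ, true_and] at hj
        have hkj : k j = Fin.castSucc a := by rw [hj.2]; simp
        have hmem : j ∈ Finset.univ.filter
            (fun i => q i = Fin.last n ∧ k i = Fin.castSucc a) := by simp [hj.1, hkj]
        rw [hi0] at hmem
        exact Finset.mem_singleton.mp hmem
    rw [if_pos ⟨hchi, hmm⟩, hset]
    simp
  · rw [if_neg h]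
    have hset : (Finset.univ.filter fun i => q i = Fin.last n ∧
        k = Function.update q i (Fin.castSucc a)) = ∅ := by
      apply Finset.filter_false_of_mem
      rintro i - ⟨hqi, hki⟩
      apply h
      constructor
      · intro j
        constructor
        · intro hqj
          by_cases hji : j = i
          · subst hji; right; rw [hki]; simp
          · left; rw [hki, Function.update_of_ne hji, hqj]
        · intro hqj
          have hji : j ≠ i := fun h' => hqj (h' ▸ hqi)
          rw [hki, Function.update_of_ne hji]
      · have hone : (Finset.univ.filter fun j => q j = Fin.last n ∧
            k j = Fin.castSucc a) = {i} := by
          apply Finset.eq_singleton_iff_unique_mem.mpr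
          refine ⟨by simp [hqi, hki], ?_⟩
          intro j hj
          simp only [Finset.mem_filter, Finset.mem_univ, true_and] at hj
          by_contra hji
          rw [hki, Function.update_of_ne hji] at hj
          exact castSucc_ne_last a (hj.1 ▸ hj.2.symm) |>.elim
        unfold mm; rw [hone]; simp
    rw [hset]; simp


/-- lowering operator: transpose of `Ym` -/
noncomputable def Zm (a : Fin n) : Matrix K K ℂ := (Ym a)ᵀ

lemma Zm_eq_sum (a : Fin n) (k q : K) :
    Zm a k q = ∑ i, if q i = Fin.castSucc a ∧ k = Function.update q i (Fin.last n)
      then (1:ℂ) else 0 := by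
  show Ym a q k = _
  rw [Ym_eq_sum]
  apply Finset.sum_congr rfl
  intro i _
  congr 1
  apply propext
  constructor
  · rintro ⟨hki, hq⟩
    constructor
    · rw [hq]; simp
    · rw [hq, Function.update_idem, ← hki, Function.update_eq_self]
  · rintro ⟨hqi, hk⟩
    constructor
    · rw [hk]; simp
    · rw [hk, Function.update_idem, ← hqi, Function.update_eq_self]

lemma Ym_wt {a : Fin n} {k q : K} (h : Ym a k q ≠ 0) : wt a k = wt a q + 2 := by
  rw [Ym_eq_sum] at h
  obtain ⟨i, -, hi⟩ := Finset.exists_ne_zero_of_sum_ne_zero h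
  rw [ne_eq, ite_eq_right_iff, not_forall] at hi
  obtain ⟨⟨hqi, hk⟩, -⟩ := hi
  rw [hk, wt_update, hqi, phiw_last, phiw_castSucc]
  ring

lemma Zm_wt {a : Fin n} {k q : K} (h : Zm a k q ≠ 0) : wt a k = wt a q - 2 := by
  have : Ym a q k ≠ 0 := h
  have := Ym_wt this
  omega

lemma mul_sumform (M N : Matrix K K ℂ) (k q : K) (c : Fin r → Prop) [DecidablePred c]
    (u : Fin r → K) (hN : ∀ p, N p q = ∑ j, if c j ∧ p = u j then (1:ℂ) else 0) :
    (M * N) k q = ∑ j, if c j then M k (u j) else 0 := by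
  rw [Matrix.mul_apply]
  have h1 : ∀ p, M k p * N p q
      = ∑ j, if c j ∧ p = u j then M k p else 0 := by
    intro p
    rw [hN p, Finset.mul_sum]
    apply Finset.sum_congr rfl
    intro j _
    rw [mul_ite, mul_one, mul_zero]
  rw [Finset.sum_congr rfl fun p _ => h1 p, Finset.sum_comm]
  apply Finset.sum_congr rfl
  intro j _
  by_cases hc : c j
  · simp only [hc, true_and, if_true]
    exact Finset.sum_ite_eq' Finset.univ (u j) (M k) |>.trans (by simp)
  · simp [hc]


lemma bracket (a : Fin n) :
    Ym a * Zm a - Zm a * Ym a = Matrix.diagonal (fun k : K => ((wt a k : ℤ) : ℂ)) := by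
  ext k q
  have hYZ : (Ym a * Zm a : Matrix K K ℂ) k q
      = ∑ j, if q j = Fin.castSucc a
          then Ym a k (Function.update q j (Fin.last n)) else 0 :=
    mul_sumform _ _ k q _ _ (fun p => Zm_eq_sum a p q)
  have hZY : (Zm a * Ym a : Matrix K K ℂ) k q
      = ∑ j, if q j = Fin.last n
          then Zm a k (Function.update q j (Fin.castSucc a)) else 0 :=
    mul_sumform _ _ k q _ _ (fun p => Ym_eq_sum a p q)
  have hYZ2 : (Ym a * Zm a : Matrix K K ℂ) k q
      = (∑ j, if q j = Fin.castSucc a ∧ k = q then (1:ℂ) else 0)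
        + ∑ j, ∑ i ∈ Finset.univ.erase j,
            (if q i = Fin.last n ∧ q j = Fin.castSucc a ∧
              k = Function.update (Function.update q j (Fin.last n)) i (Fin.castSucc a)
             then (1:ℂ) else 0) := by
    rw [hYZ, ← Finset.sum_add_distrib]
    apply Finset.sum_congr rfl
    intro j _
    by_cases hv : q j = Fin.castSucc a
    · rw [if_pos hv, Ym_eq_sum, ← Finset.add_sum_erase _ _ (Finset.mem_univ j)]
      congr 1
      · have h1 : Function.update q j (Fin.last n) j = Fin.last n := by simp
        have h2 : Function.update (Function.update q j (Fin.last n)) j (Fin.castSucc a)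
            = q := by
          rw [Function.update_idem, ← hv, Function.update_eq_self]
        rw [h1, h2]
        simp [hv]
      · apply Finset.sum_congr rfl
        intro i hi
        have hij : i ≠ j := Finset.ne_of_mem_erase hi
        rw [Function.update_of_ne hij]
        congr 1
        apply propext
        constructor
        · rintro ⟨h1, h2⟩; exact ⟨h1, hv, h2⟩
        · rintro ⟨h1, _, h2⟩; exact ⟨h1, h2⟩
    · rw [if_neg hv]
      have e1 : (if q j = Fin.castSucc a ∧ k = q then (1:ℂ) else 0) = 0 := by
        simp [hv]
      rw [e1, zero_add]
      symm
      apply Finset.sum_eq_zero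
      intro i _
      simp [hv]
  have hZY2 : (Zm a * Ym a : Matrix K K ℂ) k q
      = (∑ j, if q j = Fin.last n ∧ k = q then (1:ℂ) else 0)
        + ∑ j, ∑ i ∈ Finset.univ.erase j,
            (if q i = Fin.castSucc a ∧ q j = Fin.last n ∧
              k = Function.update (Function.update q j (Fin.castSucc a)) i (Fin.last n)
             then (1:ℂ) else 0) := by
    rw [hZY, ← Finset.sum_add_distrib]
    apply Finset.sum_congr rfl
    intro j _
    by_cases hv : q j = Fin.last n
    · rw [if_pos hv, Zm_eq_sum, ← Finset.add_sum_erase _ _ (Finset.mem_univ j)]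
      congr 1
      · have h1 : Function.update q j (Fin.castSucc a) j = Fin.castSucc a := by simp
        have h2 : Function.update (Function.update q j (Fin.castSucc a)) j (Fin.last n)
            = q := by
          rw [Function.update_idem, ← hv, Function.update_eq_self]
        rw [h1, h2]
        simp [hv]
      · apply Finset.sum_congr rfl
        intro i hi
        have hij : i ≠ j := Finset.ne_of_mem_erase hi
        rw [Function.update_of_ne hij]
        congr 1
        apply propext
        constructor
        · rintro ⟨h1, h2⟩; exact ⟨h1, hv, h2⟩
        · rintro ⟨h1, _, h2⟩; exact ⟨h1, h2⟩
    · rw [if_neg hv]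
      have e1 : (if q j = Fin.last n ∧ k = q then (1:ℂ) else 0) = 0 := by
        simp [hv]
      rw [e1, zero_add]
      symm
      apply Finset.sum_eq_zero
      intro i _
      simp [hv]
  have hoff : (∑ j, ∑ i ∈ Finset.univ.erase j,
        (if q i = Fin.last n ∧ q j = Fin.castSucc a ∧
          k = Function.update (Function.update q j (Fin.last n)) i (Fin.castSucc a)
         then (1:ℂ) else 0))
      = ∑ j, ∑ i ∈ Finset.univ.erase j,
          (if q i = Fin.castSucc a ∧ q j = Fin.last n ∧
            k = Function.update (Function.update q j (Fin.castSucc a)) i (Fin.last n)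
           then (1:ℂ) else 0) := by
    rw [Finset.sum_comm' (s := Finset.univ) (t := fun j => Finset.univ.erase j)
      (t' := Finset.univ) (s' := fun i => Finset.univ.erase i)
      (by intro x y; simp [Finset.mem_erase]; tauto)]
    apply Finset.sum_congr rfl
    intro j _
    apply Finset.sum_congr rfl
    intro i hi
    have hij : i ≠ j := Finset.ne_of_mem_erase hi
    congr 1
    apply propext
    constructor
    · rintro ⟨h1, h2, h3⟩
      refine ⟨h2, h1, ?_⟩
      rw [h3, Function.update_comm hij]
    · rintro ⟨h1, h2, h3⟩
      refine ⟨h2, h1, ?_⟩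
      rw [h3, Function.update_comm hij.symm]
  have hdiag : (∑ j, if q j = Fin.castSucc a ∧ k = q then (1:ℂ) else 0)
      - (∑ j, if q j = Fin.last n ∧ k = q then (1:ℂ) else 0)
      = if k = q then ((wt a q : ℤ) : ℂ) else 0 := by
    by_cases hk : k = q
    · rw [if_pos hk]
      simp only [hk, and_true]
      rw [← Finset.sum_sub_distrib]
      have hterm : ∀ j, ((if q j = Fin.castSucc a then (1:ℂ) else 0)
          - (if q j = Fin.last n then (1:ℂ) else 0)) = ((phiw a (q j) : ℤ) : ℂ) := by
        intro j
        unfold phiw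
        by_cases h1 : q j = Fin.castSucc a <;> by_cases h2 : q j = Fin.last n <;>
          simp [h1, h2]
      rw [Finset.sum_congr rfl fun j _ => hterm j]
      unfold wt
      push_cast
      rfl
    · simp [hk]
  rw [Matrix.sub_apply, hYZ2, hZY2, hoff, Matrix.diagonal_apply]
  have : (∑ j, if q j = Fin.castSucc a ∧ k = q then (1:ℂ) else 0)
      + (∑ j, ∑ i ∈ Finset.univ.erase j,
          (if q i = Fin.castSucc a ∧ q j = Fin.last n ∧
            k = Function.update (Function.update q j (Fin.castSucc a)) i (Fin.last n)
           then (1:ℂ) else 0))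
      - ((∑ j, if q j = Fin.last n ∧ k = q then (1:ℂ) else 0)
        + (∑ j, ∑ i ∈ Finset.univ.erase j,
          (if q i = Fin.castSucc a ∧ q j = Fin.last n ∧
            k = Function.update (Function.update q j (Fin.castSucc a)) i (Fin.last n)
           then (1:ℂ) else 0)))
      = (∑ j, if q j = Fin.castSucc a ∧ k = q then (1:ℂ) else 0)
        - (∑ j, if q j = Fin.last n ∧ k = q then (1:ℂ) else 0) := by ring
  rw [this, hdiag]
  by_cases hk : k = q
  · subst hk; rfl
  · simp [hk]


lemma ne_last_of_lt {x : Fin (n+1)} (hx : (x:ℕ) < n) : x ≠ Fin.last n := by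
  intro h; rw [h] at hx; simp at hx

lemma eq_last_of_not_lt {x : Fin (n+1)} (hx : ¬ (x:ℕ) < n) : x = Fin.last n := by
  have := x.isLt
  apply Fin.ext
  simp only [Fin.val_last]
  omega

lemma encMat_one_single (a : Fin n) (t : ℂ) (x y : Fin (n+1)) :
    encMat (1 : Matrix (Fin n) (Fin n) ℂ) (Pi.single a t) x y
      = if y = Fin.last n then
          (if x = Fin.last n then 1 else if x = Fin.castSucc a then t else 0)
        else (if x = y then 1 else 0) := by
  unfold encMat
  by_cases hx : (x:ℕ) < n <;> by_cases hy : (y:ℕ) < n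
  · rw [dif_pos hx, dif_pos hy, if_neg (ne_last_of_lt hy)]
    rw [Matrix.one_apply]
    have : ((⟨(x:ℕ), hx⟩ : Fin n) = ⟨(y:ℕ), hy⟩) ↔ x = y := by
      rw [Fin.ext_iff, Fin.ext_iff]
    by_cases h : x = y
    · rw [if_pos (this.mpr h), if_pos h]
    · rw [if_neg (fun h' => h (this.mp h')), if_neg h]
  · rw [dif_pos hx, dif_neg hy, if_pos (eq_last_of_not_lt hy),
      if_neg (ne_last_of_lt hx), Pi.single_apply]
    have : ((⟨(x:ℕ), hx⟩ : Fin n) = a) ↔ x = Fin.castSucc a := by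
      rw [Fin.ext_iff, Fin.ext_iff]
      simp
    by_cases h : x = Fin.castSucc a
    · rw [if_pos (this.mpr h), if_pos h]
    · rw [if_neg (fun h' => h (this.mp h')), if_neg h]
  · rw [dif_neg hx, if_pos hy, if_neg (ne_last_of_lt hy)]
    rw [if_neg]
    rw [eq_last_of_not_lt hx]
    exact fun h => (ne_last_of_lt hy) h.symm
  · rw [dif_neg hx, if_neg hy, if_pos (eq_last_of_not_lt hy),
      if_pos (eq_last_of_not_lt hx)]

lemma PhiMat_encMat (a : Fin n) (t : ℂ) (k q : K) :
    PhiMat (m := r) (encMat (1 : Matrix (Fin n) (Fin n) ℂ) (Pi.single a t)) k q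
      = (if chi a k q then 1 else 0) * t ^ (mm a k q) := by
  unfold PhiMat
  by_cases h : chi a k q
  · rw [if_pos h, one_mul]
    have hfac : ∀ i, encMat (1 : Matrix (Fin n) (Fin n) ℂ) (Pi.single a t) (k i) (q i)
        = t ^ (if q i = Fin.last n ∧ k i = Fin.castSucc a then 1 else 0) := by
      intro i
      rw [encMat_one_single]
      by_cases hq : q i = Fin.last n
      · rcases (h i).1 hq with hk | hk
        · rw [if_pos hq, if_pos hk]
          have : ¬ (q i = Fin.last n ∧ k i = Fin.castSucc a) := by
            rintro ⟨-, h2⟩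
            exact castSucc_ne_last a (h2 ▸ hk)
          rw [if_neg this, pow_zero]
        · rw [if_pos hq, if_neg (hk ▸ castSucc_ne_last a), if_pos hk,
            if_pos ⟨hq, hk⟩, pow_one]
      · have hk := (h i).2 hq
        rw [if_neg hq, if_pos hk]
        have : ¬ (q i = Fin.last n ∧ k i = Fin.castSucc a) := fun h' => hq h'.1
        rw [if_neg this, pow_zero]
    rw [Finset.prod_congr rfl fun i _ => hfac i, Finset.prod_pow_eq_pow_sum]
    congr 1
    rw [Finset.sum_boole]
    rfl
  · rw [if_neg h, zero_mul]
    obtain ⟨i, hi⟩ := not_forall.mp h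
    apply Finset.prod_eq_zero (Finset.mem_univ i)
    rw [encMat_one_single]
    by_cases hq : q i = Fin.last n
    · have hnotor : ¬ (k i = Fin.last n ∨ k i = Fin.castSucc a) := by
        intro hor
        exact hi ⟨fun _ => hor, fun hne => absurd hq hne⟩
      rw [not_or] at hnotor
      rw [if_pos hq, if_neg hnotor.1, if_neg hnotor.2]
    · have hkq : k i ≠ q i := by
        intro hk
        exact hi ⟨fun h' => absurd h' hq, fun _ => hk⟩
      rw [if_neg hq, if_neg hkq]


lemma Ym_comm (a : Fin n) (F : Matrix K K ℂ)
    (hF : ∀ t : ℂ, F * PhiMat (m := r) (encMat (1 : Matrix (Fin n) (Fin n) ℂ) (Pi.single a t))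
      = PhiMat (m := r) (encMat (1 : Matrix (Fin n) (Fin n) ℂ) (Pi.single a t)) * F) :
    F * Ym a = Ym a * F := by
  ext k q
  set P : Polynomial ℂ := ∑ p : K,
    Polynomial.C (F k p * (if chi a p q then 1 else 0)) * Polynomial.X ^ (mm a p q) with hP
  set Q : Polynomial ℂ := ∑ p : K,
    Polynomial.C ((if chi a k p then 1 else 0) * F p q) * Polynomial.X ^ (mm a k p) with hQ
  have hPQ : P = Q := by
    apply Polynomial.funext
    intro t
    have h1 : P.eval t = (F * PhiMat (m := r)
        (encMat (1 : Matrix (Fin n) (Fin n) ℂ) (Pi.single a t)) : Matrix K K ℂ) k q := by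
      rw [hP, Polynomial.eval_finset_sum, Matrix.mul_apply]
      apply Finset.sum_congr rfl
      intro p _
      rw [PhiMat_encMat]
      simp [mul_assoc]
    have h2 : Q.eval t = (PhiMat (m := r)
        (encMat (1 : Matrix (Fin n) (Fin n) ℂ) (Pi.single a t)) * F : Matrix K K ℂ) k q := by
      rw [hQ, Polynomial.eval_finset_sum, Matrix.mul_apply]
      apply Finset.sum_congr rfl
      intro p _
      rw [PhiMat_encMat]
      simp
      ring
    rw [h1, h2, hF t]
  have hcoeff : P.coeff 1 = Q.coeff 1 := by rw [hPQ]
  have hPc : P.coeff 1 = (F * Ym a : Matrix K K ℂ) k q := by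
    rw [hP, Polynomial.finset_sum_coeff, Matrix.mul_apply]
    apply Finset.sum_congr rfl
    intro p _
    rw [Polynomial.coeff_C_mul, Polynomial.coeff_X_pow]
    unfold Ym
    by_cases h1 : chi a p q <;> by_cases h2 : mm a p q = 1 <;>
      simp [h1, h2, eq_comm]
  have hQc : Q.coeff 1 = (Ym a * F : Matrix K K ℂ) k q := by
    rw [hQ, Polynomial.finset_sum_coeff, Matrix.mul_apply]
    apply Finset.sum_congr rfl
    intro p _
    rw [Polynomial.coeff_C_mul, Polynomial.coeff_X_pow]
    unfold Ym
    by_cases h1 : chi a k p <;> by_cases h2 : mm a k p = 1 <;>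
      simp [h1, h2, eq_comm]
  rw [← hPc, hcoeff, hQc]


/-- the weight-`lam` component of `F` (w.r.t. the `a`-weight) -/
noncomputable def wpart (a : Fin n) (F : Matrix K K ℂ) (lam : ℤ) : Matrix K K ℂ :=
  fun k q => if wt a k - wt a q = lam then F k q else 0

/-- repeated application of `ad (Zm a)` to the weight component -/
noncomputable def chain (a : Fin n) (F : Matrix K K ℂ) (lam : ℤ) : ℕ → Matrix K K ℂ
  | 0 => wpart a F lam
  | j+1 => Zm a * chain a F lam j - chain a F lam j * Zm a

/-- matrix supported on pairs of weight difference `mu` -/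
def SuppW (a : Fin n) (mu : ℤ) (X : Matrix K K ℂ) : Prop :=
  ∀ k q, wt a k - wt a q ≠ mu → X k q = 0

lemma suppW_chain (a : Fin n) (F : Matrix K K ℂ) (lam : ℤ) :
    ∀ j : ℕ, SuppW a (lam - 2*(j:ℤ)) (chain a F lam j) := by
  intro j
  induction j with
  | zero =>
    intro k q h
    unfold chain wpart
    rw [if_neg (by push_cast at h ⊢; omega)]
  | succ m ih =>
    intro k q h
    show (Zm a * chain a F lam m - chain a F lam m * Zm a : Matrix K K ℂ) k q = 0
    rw [Matrix.sub_apply, Matrix.mul_apply, Matrix.mul_apply]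
    rw [Finset.sum_eq_zero, Finset.sum_eq_zero, sub_zero]
    · intro p _
      by_cases hZ : Zm a p q = 0
      · rw [hZ, mul_zero]
      · have hw := Zm_wt hZ
        have : wt a k - wt a p ≠ lam - 2*(m:ℤ) := by push_cast at h ⊢; omega
        rw [ih k p this, zero_mul]
    · intro p _
      by_cases hZ : Zm a k p = 0
      · rw [hZ, zero_mul]
      · have hw := Zm_wt hZ
        have : wt a p - wt a q ≠ lam - 2*(m:ℤ) := by push_cast at h ⊢; omega
        rw [ih p q this, mul_zero]

lemma Hcomm (a : Fin n) (X : Matrix K K ℂ) (mu : ℤ) (hX : SuppW a mu X) :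
    Matrix.diagonal (fun k : K => ((wt a k : ℤ) : ℂ)) * X
      - X * Matrix.diagonal (fun k : K => ((wt a k : ℤ) : ℂ)) = ((mu : ℤ) : ℂ) • X := by
  ext k q
  rw [Matrix.sub_apply, Matrix.diagonal_mul, Matrix.mul_diagonal, Matrix.smul_apply]
  by_cases h : wt a k - wt a q = mu
  · have : ((wt a k : ℤ) : ℂ) - ((wt a q : ℤ) : ℂ) = ((mu : ℤ) : ℂ) := by
      rw [← Int.cast_sub, h]
    rw [smul_eq_mul, ← this]
    ring
  · rw [hX k q h]
    simp

lemma wpart_comm (a : Fin n) (F : Matrix K K ℂ) (lam : ℤ)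
    (hcomm : F * Ym a = Ym a * F) :
    Ym a * wpart a F lam = wpart a F lam * Ym a := by
  ext k q
  have h1 : (Ym a * wpart a F lam : Matrix K K ℂ) k q
      = if wt a k - wt a q = lam + 2 then (Ym a * F : Matrix K K ℂ) k q else 0 := by
    rw [Matrix.mul_apply]
    by_cases h : wt a k - wt a q = lam + 2
    · rw [if_pos h, Matrix.mul_apply]
      apply Finset.sum_congr rfl
      intro p _
      by_cases hY : Ym a k p = 0
      · rw [hY, zero_mul, zero_mul]
      · have hw := Ym_wt hY
        unfold wpart
        rw [if_pos (by omega)]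
    · rw [if_neg h]
      apply Finset.sum_eq_zero
      intro p _
      by_cases hY : Ym a k p = 0
      · rw [hY, zero_mul]
      · have hw := Ym_wt hY
        unfold wpart
        rw [if_neg (by omega), mul_zero]
  have h2 : (wpart a F lam * Ym a : Matrix K K ℂ) k q
      = if wt a k - wt a q = lam + 2 then (F * Ym a : Matrix K K ℂ) k q else 0 := by
    rw [Matrix.mul_apply]
    by_cases h : wt a k - wt a q = lam + 2
    · rw [if_pos h, Matrix.mul_apply]
      apply Finset.sum_congr rfl
      intro p _
      by_cases hY : Ym a p q = 0
      · rw [hY, mul_zero, mul_zero]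
      · have hw := Ym_wt hY
        unfold wpart
        rw [if_pos (by omega)]
    · rw [if_neg h]
      apply Finset.sum_eq_zero
      intro p _
      by_cases hY : Ym a p q = 0
      · rw [hY, mul_zero]
      · have hw := Ym_wt hY
        unfold wpart
        rw [if_neg (by omega), zero_mul]
  rw [h1, h2, hcomm]

lemma comm_chain (a : Fin n) (F : Matrix K K ℂ) (lam : ℤ)
    (hcomm : F * Ym a = Ym a * F) :
    ∀ j : ℕ, Ym a * chain a F lam (j+1) - chain a F lam (j+1) * Ym a
      = (((j:ℂ)+1) * ((lam : ℂ) - (j:ℂ))) • chain a F lam j := by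
  intro j
  induction j with
  | zero =>
    show Ym a * (Zm a * chain a F lam 0 - chain a F lam 0 * Zm a)
        - (Zm a * chain a F lam 0 - chain a F lam 0 * Zm a) * Ym a = _
    have hring : Ym a * (Zm a * chain a F lam 0 - chain a F lam 0 * Zm a)
        - (Zm a * chain a F lam 0 - chain a F lam 0 * Zm a) * Ym a
      = Zm a * (Ym a * chain a F lam 0 - chain a F lam 0 * Ym a)
        - (Ym a * chain a F lam 0 - chain a F lam 0 * Ym a) * Zm a
        + ((Ym a * Zm a - Zm a * Ym a) * chain a F lam 0
            - chain a F lam 0 * (Ym a * Zm a - Zm a * Ym a)) := by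
      noncomm_ring
    rw [hring]
    have h0 : Ym a * chain a F lam 0 - chain a F lam 0 * Ym a = 0 := by
      show Ym a * wpart a F lam - wpart a F lam * Ym a = 0
      rw [wpart_comm a F lam hcomm, sub_self]
    have hsupp : SuppW a lam (chain a F lam 0) := by
      have := suppW_chain a F lam 0
      simpa using this
    rw [h0, bracket, Hcomm a _ lam hsupp]
    simp
  | succ m ih =>
    show Ym a * (Zm a * chain a F lam (m+1) - chain a F lam (m+1) * Zm a)
        - (Zm a * chain a F lam (m+1) - chain a F lam (m+1) * Zm a) * Ym a = _
    have hring : Ym a * (Zm a * chain a F lam (m+1) - chain a F lam (m+1) * Zm a)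
        - (Zm a * chain a F lam (m+1) - chain a F lam (m+1) * Zm a) * Ym a
      = Zm a * (Ym a * chain a F lam (m+1) - chain a F lam (m+1) * Ym a)
        - (Ym a * chain a F lam (m+1) - chain a F lam (m+1) * Ym a) * Zm a
        + ((Ym a * Zm a - Zm a * Ym a) * chain a F lam (m+1)
            - chain a F lam (m+1) * (Ym a * Zm a - Zm a * Ym a)) := by
      noncomm_ring
    rw [hring, ih]
    have hsupp := suppW_chain a F lam (m+1)
    rw [bracket, Hcomm a _ _ hsupp]
    rw [Matrix.mul_smul, Matrix.smul_mul, ← smul_sub]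
    have hc : (Zm a * chain a F lam m - chain a F lam m * Zm a)
        = chain a F lam (m+1) := rfl
    rw [hc, ← add_smul]
    congr 1
    push_cast
    ring


lemma wt_bound (a : Fin n) (k : K) : -(r:ℤ) ≤ wt a k ∧ wt a k ≤ r := by
  have h1 : ∀ j, -1 ≤ phiw a (k j) ∧ phiw a (k j) ≤ 1 := by
    intro j
    unfold phiw
    split_ifs <;> omega
  constructor
  · calc -(r:ℤ) = ∑ _j : Fin r, (-1 : ℤ) := by simp
    _ ≤ wt a k := Finset.sum_le_sum fun j _ => (h1 j).1
  · calc wt a k ≤ ∑ _j : Fin r, (1 : ℤ) := Finset.sum_le_sum fun j _ => (h1 j).2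
    _ = r := by simp

lemma chain_vanish (a : Fin n) (F : Matrix K K ℂ) (lam : ℤ) (j : ℕ)
    (h : lam - 2*(j:ℤ) < -(2*(r:ℤ))) : chain a F lam j = 0 := by
  ext k q
  rw [Matrix.zero_apply]
  apply suppW_chain a F lam j
  have hk := wt_bound a k
  have hq := wt_bound a q
  omega

lemma chain_down (a : Fin n) (F : Matrix K K ℂ) (lam : ℤ)
    (hcomm : F * Ym a = Ym a * F) (hlam : lam < 0) (j : ℕ)
    (h : chain a F lam (j+1) = 0) : chain a F lam j = 0 := by
  have hc := comm_chain a F lam hcomm j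
  rw [h] at hc
  simp only [Matrix.mul_zero, Matrix.zero_mul, sub_zero] at hc
  have hne : (((j:ℂ)+1) * ((lam : ℂ) - (j:ℂ))) ≠ 0 := by
    apply mul_ne_zero
    · have h1 : ((j+1 : ℕ) : ℂ) ≠ 0 := Nat.cast_ne_zero.mpr (Nat.succ_ne_zero j)
      push_cast at h1
      exact h1
    · have : ((lam - (j:ℤ) : ℤ) : ℂ) ≠ 0 := Int.cast_ne_zero.mpr (by omega)
      push_cast at this
      exact this
  have := hc.symm
  rcases smul_eq_zero.mp this with h' | h'
  · exact absurd h' hne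
  · exact h'

lemma wpart_zero_of_neg (a : Fin n) (F : Matrix K K ℂ) (lam : ℤ)
    (hcomm : F * Ym a = Ym a * F) (hlam : lam < 0) : wpart a F lam = 0 := by
  have hup : ∀ t j, chain a F lam (j + t) = 0 → chain a F lam j = 0 := by
    intro t
    induction t with
    | zero => intro j h; simpa using h
    | succ m ih =>
      intro j h
      apply ih
      apply chain_down a F lam hcomm hlam
      have : j + m + 1 = j + (m + 1) := by omega
      rw [this]
      exact h
  have hbig : chain a F lam (0 + (r+1)) = 0 := by
    apply chain_vanish
    push_cast
    omega
  exact hup (r+1) 0 hbig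

lemma wt_sum (k : K) : ∑ a : Fin n, wt a k = (n+1) * (levelOf k : ℤ) - n*r := by
  unfold wt
  rw [Finset.sum_comm]
  have hterm : ∀ j, ∑ a : Fin n, phiw a (k j)
      = (n+1) * (if k j ≠ Fin.last n then 1 else 0) - n := by
    intro j
    by_cases h : k j = Fin.last n
    · simp only [h, ne_eq, not_true_eq_false, if_false, if_neg]
      have : ∀ a : Fin n, phiw a (Fin.last n) = -1 := phiw_last
      rw [Finset.sum_congr rfl fun a _ => this a]
      simp
    · obtain ⟨b, hb⟩ := Fin.exists_castSucc_eq.mpr h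
      have hsum : ∑ a : Fin n, phiw a (k j) = 1 := by
        have : ∀ a : Fin n, phiw a (k j)
            = if a = b then 1 else 0 := by
          intro a
          unfold phiw
          rw [if_neg h, sub_zero]
          by_cases hab : a = b
          · subst hab
            rw [if_pos hb.symm, if_pos rfl]
          · have hne : k j ≠ Fin.castSucc a := by
              rw [← hb]
              intro hcc
              exact hab (Fin.castSucc_injective n hcc).symm
            rw [if_neg hne, if_neg hab]
        rw [Finset.sum_congr rfl fun a _ => this a]
        simp
      rw [hsum, if_pos h]
      ring
  rw [Finset.sum_congr rfl fun j _ => hterm j]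
  rw [Finset.sum_sub_distrib, ← Finset.mul_sum]
  have : ∑ j : Fin r, (if k j ≠ Fin.last n then (1:ℤ) else 0) = (levelOf k : ℤ) := by
    rw [Finset.sum_boole]
    unfold levelOf
    push_cast
    rfl
  rw [this]
  simp [mul_comm]

lemma master (F : Matrix K K ℂ)
    (hcomm : ∀ a : Fin n, F * Ym a = Ym a * F) :
    ∀ k q : K, levelOf k < levelOf q → F k q = 0 := by
  intro k q hlev
  have hex : ∃ a : Fin n, wt a k - wt a q < 0 := by
    by_contra hc
    push_neg at hc
    have hsum : (0:ℤ) ≤ ∑ a : Fin n, (wt a k - wt a q) :=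
      Finset.sum_nonneg fun a _ => hc a
    rw [Finset.sum_sub_distrib, wt_sum, wt_sum] at hsum
    have : (levelOf q : ℤ) ≤ levelOf k := by nlinarith
    omega
  obtain ⟨a, ha⟩ := hex
  have h0 := wpart_zero_of_neg a F (wt a k - wt a q) (hcomm a) ha
  have : wpart a F (wt a k - wt a q) k q = 0 := by rw [h0]; rfl
  unfold wpart at this
  rwa [if_pos rfl] at this

end Core

/-- Let `G` be a closed subgroup of `GL(V)` (a set `Gs` of invertible
matrices containing `1`) and `G̲ = G ×_ρ V` the enhanced group acting diagonally on
`V̲^{⊗r}` via the matrices `encMat g v`.  For every `G̲`-equivariant linear endomorphism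
`f` of `V̲^{⊗r}` and every `0 ≤ l ≤ r`, we have `f(V̲_l^{⊗r}) ⊆ W_l`, where
`W_l = ⊕_{t=l}^{r} V̲_t^{⊗r}`; in particular `f` preserves the filtration
`W_0 ⊇ W_1 ⊇ ⋯ ⊇ W_r`. -/
theorem endo_of_enhanced_group_preserves_filtration {n r : ℕ}
    (Gs : Set (Matrix (Fin n) (Fin n) ℂ)) (h1 : (1 : Matrix (Fin n) (Fin n) ℂ) ∈ Gs)
    (hunit : ∀ g ∈ Gs, IsUnit g)
    (f : ((Fin r → Fin (n + 1)) → ℂ) →ₗ[ℂ] ((Fin r → Fin (n + 1)) → ℂ))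
    (hf : ∀ g ∈ Gs, ∀ v : Fin n → ℂ,
      f ∘ₗ (PhiMat (m := r) (encMat g v)).mulVecLin =
        (PhiMat (m := r) (encMat g v)).mulVecLin ∘ₗ f) :
    (∀ l, l ≤ r → ∀ x : (Fin r → Fin (n + 1)) → ℂ,
        (∀ k, levelOf (n := n) k ≠ l → x k = 0) →
        ∀ k, levelOf (n := n) k < l → f x k = 0) ∧
    (∀ l, l ≤ r → ∀ x : (Fin r → Fin (n + 1)) → ℂ,
        (∀ k, levelOf (n := n) k < l → x k = 0) →
        ∀ k, levelOf (n := n) k < l → f x k = 0) := by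
  classical
  set F := LinearMap.toMatrix' f with hFdef
  have hkey : ∀ v : Fin n → ℂ,
      LinearMap.toMatrix' (PhiMat (m := r) (encMat (1 : Matrix (Fin n) (Fin n) ℂ) v)).mulVecLin
        = PhiMat (m := r) (encMat (1 : Matrix (Fin n) (Fin n) ℂ) v) := by
    intro v
    rw [← Matrix.toLin'_apply', LinearMap.toMatrix'_toLin']
  have hcommM : ∀ v : Fin n → ℂ,
      F * PhiMat (m := r) (encMat (1 : Matrix (Fin n) (Fin n) ℂ) v)
        = PhiMat (m := r) (encMat (1 : Matrix (Fin n) (Fin n) ℂ) v) * F := by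
    intro v
    have h := congrArg LinearMap.toMatrix' (hf 1 h1 v)
    rw [LinearMap.toMatrix'_comp, LinearMap.toMatrix'_comp, hkey v] at h
    exact h
  have hYcomm : ∀ a : Fin n, F * Ym a = Ym a * F := fun a =>
    Ym_comm a F (fun t => hcommM (Pi.single a t))
  have hmaster := master F hYcomm
  have hfapply : ∀ (x : (Fin r → Fin (n+1)) → ℂ) (k : Fin r → Fin (n+1)),
      f x k = ∑ q, F k q * x q := by
    intro x k
    have hfx : f x = Matrix.toLin' F x := by rw [hFdef, Matrix.toLin'_toMatrix']
    rw [hfx, Matrix.toLin'_apply]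
    rfl
  constructor
  · intro l _ x hx k hk
    rw [hfapply]
    apply Finset.sum_eq_zero
    intro q _
    by_cases hq : x q = 0
    · rw [hq, mul_zero]
    · have hlq : levelOf (n := n) q = l := by
        by_contra hc
        exact hq (hx q hc)
      rw [hmaster k q (by omega), zero_mul]
  · intro l _ x hx k hk
    rw [hfapply]
    apply Finset.sum_eq_zero
    intro q _
    by_cases hq : x q = 0
    · rw [hq, mul_zero]
    · have hlq : ¬ (levelOf (n := n) q < l) := fun hc => hq (hx q hc)
      rw [hmaster k q (by omega), zero_mul]

end EnhancedBrauer
end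

section
/- Let G = O(V) or Sp(V) and I, J ⊆ {1,...,r} with #I = #J = s. Then Hom_G(V̲_I^{⊗r}, V̲_J^{⊗r}) = E_{JI} ∘ B_s^{(I)}(εn), i.e., every G-module homomorphism V̲_I^{⊗r} → V̲_J^{⊗r} is of the form E_{JI} ∘ σ^I for a unique σ ∈ B_s(εn), and conversely all such maps are G-homomorphisms. -/
open Finset Matrix

namespace EnhancedBrauer

section Aux

variable {n r s : ℕ}

lemma emb_apply_mem {K : Finset (Fin r)} (hK : K.card = s) (a : Fin s → Fin n)
    {i : Fin r} (h : i ∈ K) :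
    emb K hK a i = Fin.castSucc (a ((K.orderIsoOfFin hK).symm ⟨i, h⟩)) := dif_pos h

lemma emb_apply_not_mem {K : Finset (Fin r)} (hK : K.card = s) (a : Fin s → Fin n)
    {i : Fin r} (h : i ∉ K) : emb K hK a i = Fin.last n := dif_neg h

lemma isSupp_emb {K : Finset (Fin r)} (hK : K.card = s) (a : Fin s → Fin n) :
    isSupp K (emb K hK a) := by
  intro i
  constructor
  · intro h; rw [emb_apply_mem hK a h]; exact (Fin.castSucc_lt_last _).ne
  · intro h; by_contra hi; exact h (emb_apply_not_mem hK a hi)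

lemma emb_apply_orderIso {K : Finset (Fin r)} (hK : K.card = s) (a : Fin s → Fin n)
    (j : Fin s) :
    emb K hK a ((K.orderIsoOfFin hK) j : Fin r) = Fin.castSucc (a j) := by
  rw [emb_apply_mem hK a ((K.orderIsoOfFin hK) j).2]
  congr 2
  exact (K.orderIsoOfFin hK).symm_apply_apply j

lemma emb_injective_s19 {K : Finset (Fin r)} (hK : K.card = s) :
    Function.Injective (emb (n := n) K hK) := by
  intro a b h
  funext j
  have h1 := congrFun h ((K.orderIsoOfFin hK) j : Fin r)
  rw [emb_apply_orderIso hK a j, emb_apply_orderIso hK b j] at h1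
  exact Fin.castSucc_injective _ h1

lemma isSupp_iff {K : Finset (Fin r)} (hK : K.card = s) (k : Fin r → Fin (n + 1)) :
    isSupp K k ↔ ∃ a : Fin s → Fin n, k = emb K hK a := by
  constructor
  · intro h
    refine ⟨fun j => Fin.castPred (k ((K.orderIsoOfFin hK) j : Fin r))
      ((h _).mp (Finset.coe_mem _)), ?_⟩
    funext i
    by_cases hi : i ∈ K
    · rw [emb_apply_mem hK _ hi, Fin.castSucc_castPred]
      exact (congrArg k (by simp)).symm
    · rw [emb_apply_not_mem hK _ hi]
      exact not_not.mp (fun hne => hi ((h i).mpr hne))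
  · rintro ⟨a, rfl⟩; exact isSupp_emb hK a

lemma sum_emb {K : Finset (Fin r)} (hK : K.card = s) (F : (Fin r → Fin (n + 1)) → ℂ)
    (h0 : ∀ p, ¬ isSupp K p → F p = 0) :
    (∑ p, F p) = ∑ a : Fin s → Fin n, F (emb K hK a) := by
  classical
  have h1 : (∑ a : Fin s → Fin n, F (emb K hK a))
      = ∑ p ∈ Finset.univ.image (emb K hK), F p :=
    (Finset.sum_image (fun x _ y _ h => emb_injective_s19 hK h)).symm
  rw [h1]
  refine (Finset.sum_subset (Finset.subset_univ _) (fun p _ hp => h0 p (fun hs => hp ?_))).symm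
  obtain ⟨a, rfl⟩ := (isSupp_iff hK p).mp hs
  exact Finset.mem_image.mpr ⟨a, Finset.mem_univ a, rfl⟩

lemma encMat_cs_cs (g : Matrix (Fin n) (Fin n) ℂ) (v : Fin n → ℂ) (x y : Fin n) :
    encMat g v (Fin.castSucc x) (Fin.castSucc y) = g x y := by
  simp [encMat, x.isLt, y.isLt]

lemma encMat_last_last (g : Matrix (Fin n) (Fin n) ℂ) (v : Fin n → ℂ) :
    encMat g v (Fin.last n) (Fin.last n) = 1 := by
  simp [encMat]

lemma encMat_zero_of_mismatch (g : Matrix (Fin n) (Fin n) ℂ) (x y : Fin (n + 1))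
    (h : ¬ (x = Fin.last n ↔ y = Fin.last n)) : encMat g 0 x y = 0 := by
  by_cases hx : x = Fin.last n
  · have hy : y ≠ Fin.last n := fun hy => h ⟨fun _ => hy, fun _ => hx⟩
    subst hx
    have hy' : (y : ℕ) < n := Fin.val_lt_last hy
    simp [encMat, hy']
  · have hy : y = Fin.last n := by
      by_contra hy; exact h ⟨fun hx' => absurd hx' hx, fun hy' => absurd hy' hy⟩
    subst hy
    have hx' : (x : ℕ) < n := Fin.val_lt_last hx
    simp [encMat, hx']

lemma phiMat_enc_zero (g : Matrix (Fin n) (Fin n) ℂ) {k q : Fin r → Fin (n + 1)}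
    (i : Fin r) (h : ¬ (k i = Fin.last n ↔ q i = Fin.last n)) :
    PhiMat (m := r) (encMat g 0) k q = 0 :=
  Finset.prod_eq_zero (Finset.mem_univ i) (encMat_zero_of_mismatch g _ _ h)

lemma phiMat_enc_zero_left {K : Finset (Fin r)} {k q : Fin r → Fin (n + 1)}
    (hk : isSupp K k) (hq : ¬ isSupp K q) (g : Matrix (Fin n) (Fin n) ℂ) :
    PhiMat (m := r) (encMat g 0) k q = 0 := by
  obtain ⟨i, hi⟩ := not_forall.mp hq
  refine phiMat_enc_zero g i ?_
  have h1 := hk i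
  simp only [ne_eq] at h1 hi ⊢
  tauto

lemma phiMat_enc_zero_right {K : Finset (Fin r)} {k q : Fin r → Fin (n + 1)}
    (hk : ¬ isSupp K k) (hq : isSupp K q) (g : Matrix (Fin n) (Fin n) ℂ) :
    PhiMat (m := r) (encMat g 0) k q = 0 := by
  obtain ⟨i, hi⟩ := not_forall.mp hk
  refine phiMat_enc_zero g i ?_
  have h1 := hq i
  simp only [ne_eq] at h1 hi ⊢
  tauto

lemma phiMat_enc_emb (g : Matrix (Fin n) (Fin n) ℂ) {K : Finset (Fin r)}
    (hK : K.card = s) (a b : Fin s → Fin n) :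
    PhiMat (m := r) (encMat g 0) (emb K hK a) (emb K hK b) = PhiMat (m := s) g a b := by
  unfold PhiMat
  rw [← Finset.prod_subset (Finset.subset_univ K) (fun i _ hi => by
    rw [emb_apply_not_mem hK a hi, emb_apply_not_mem hK b hi, encMat_last_last])]
  rw [← Finset.prod_coe_sort]
  rw [← Equiv.prod_comp (K.orderIsoOfFin hK).toEquiv]
  refine Finset.prod_congr rfl (fun j _ => ?_)
  rw [show ((K.orderIsoOfFin hK).toEquiv j : Fin r) = ((K.orderIsoOfFin hK) j : Fin r) from rfl,
    emb_apply_orderIso hK a j, emb_apply_orderIso hK b j, encMat_cs_cs]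

lemma EMat_apply_emb {I J : Finset (Fin r)} (hI : I.card = s) (hJ : J.card = s)
    (a b : Fin s → Fin n) :
    EMat (n := n) J I hJ hI (emb J hJ a) (emb I hI b) = if a = b then 1 else 0 := by
  unfold EMat
  have hcond : ∀ c : Fin s → Fin n,
      (emb J hJ a = emb J hJ c ∧ emb I hI b = emb I hI c) ↔ (c = a ∧ c = b) := by
    intro c
    constructor
    · rintro ⟨h1, h2⟩; exact ⟨(emb_injective_s19 hJ h1).symm, (emb_injective_s19 hI h2).symm⟩
    · rintro ⟨h1, h2⟩; exact ⟨by rw [h1], by rw [h2]⟩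
  simp only [hcond]
  by_cases hab : a = b
  · subst hab; simp
  · rw [if_neg hab]
    exact Finset.sum_eq_zero fun c _ => if_neg (fun hc => hab (hc.1.symm.trans hc.2))

lemma EMat_zero_left {I J : Finset (Fin r)} (hI : I.card = s) (hJ : J.card = s)
    {k q : Fin r → Fin (n + 1)} (h : ¬ isSupp J k) : EMat (n := n) J I hJ hI k q = 0 :=
  Finset.sum_eq_zero fun c _ => if_neg (by rintro ⟨h1, h2⟩; exact h (h1 ▸ isSupp_emb hJ c))

lemma EMat_zero_right {I J : Finset (Fin r)} (hI : I.card = s) (hJ : J.card = s)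
    {k q : Fin r → Fin (n + 1)} (h : ¬ isSupp I q) : EMat (n := n) J I hJ hI k q = 0 :=
  Finset.sum_eq_zero fun c _ => if_neg (by rintro ⟨h1, h2⟩; exact h (h2 ▸ isSupp_emb hI c))

lemma opMat_apply_emb {I : Finset (Fin r)} (hI : I.card = s)
    (A : Matrix (Fin s → Fin n) (Fin s → Fin n) ℂ) (a b : Fin s → Fin n) :
    opMat (n := n) I hI A (emb I hI a) (emb I hI b) = A a b := by
  unfold opMat
  have hcond : ∀ c d : Fin s → Fin n,
      (emb I hI a = emb I hI c ∧ emb I hI b = emb I hI d) ↔ (c = a ∧ d = b) := by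
    intro c d
    constructor
    · rintro ⟨h1, h2⟩; exact ⟨(emb_injective_s19 hI h1).symm, (emb_injective_s19 hI h2).symm⟩
    · rintro ⟨h1, h2⟩; exact ⟨by rw [h1], by rw [h2]⟩
  simp only [hcond]
  simp [ite_and, Finset.sum_ite_eq']

lemma opMat_zero_left {I : Finset (Fin r)} (hI : I.card = s)
    (A : Matrix (Fin s → Fin n) (Fin s → Fin n) ℂ) {k q : Fin r → Fin (n + 1)}
    (h : ¬ isSupp I k) : opMat (n := n) I hI A k q = 0 :=
  Finset.sum_eq_zero fun c _ => Finset.sum_eq_zero fun d _ =>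
    if_neg (by rintro ⟨h1, h2⟩; exact h (h1 ▸ isSupp_emb hI c))

lemma opMat_zero_right {I : Finset (Fin r)} (hI : I.card = s)
    (A : Matrix (Fin s → Fin n) (Fin s → Fin n) ℂ) {k q : Fin r → Fin (n + 1)}
    (h : ¬ isSupp I q) : opMat (n := n) I hI A k q = 0 :=
  Finset.sum_eq_zero fun c _ => Finset.sum_eq_zero fun d _ =>
    if_neg (by rintro ⟨h1, h2⟩; exact h (h2 ▸ isSupp_emb hI d))

lemma mulEO_apply {I J : Finset (Fin r)} (hI : I.card = s) (hJ : J.card = s)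
    (A : Matrix (Fin s → Fin n) (Fin s → Fin n) ℂ) (a b : Fin s → Fin n) :
    (EMat (n := n) J I hJ hI * opMat (n := n) I hI A) (emb J hJ a) (emb I hI b) = A a b := by
  rw [Matrix.mul_apply]
  rw [sum_emb hI (fun p => EMat (n := n) J I hJ hI (emb J hJ a) p * opMat I hI A p (emb I hI b))
    (fun p hp => by simp only [EMat_zero_right hI hJ hp, zero_mul])]
  simp only [EMat_apply_emb hI hJ, opMat_apply_emb hI]
  simp [ite_mul]

lemma mulEO_zero {I J : Finset (Fin r)} (hI : I.card = s) (hJ : J.card = s)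
    (A : Matrix (Fin s → Fin n) (Fin s → Fin n) ℂ) {k q : Fin r → Fin (n + 1)}
    (h : ¬ isSupp J k ∨ ¬ isSupp I q) :
    (EMat (n := n) J I hJ hI * opMat (n := n) I hI A) k q = 0 := by
  rw [Matrix.mul_apply]
  refine Finset.sum_eq_zero fun p _ => ?_
  rcases h with h | h
  · rw [EMat_zero_left hI hJ h, zero_mul]
  · rw [opMat_zero_right hI A h, mul_zero]

lemma key1 {J : Finset (Fin r)} (hJ : J.card = s) (g : Matrix (Fin n) (Fin n) ℂ)
    (M : Matrix (Fin r → Fin (n + 1)) (Fin r → Fin (n + 1)) ℂ) (a : Fin s → Fin n)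
    (q : Fin r → Fin (n + 1)) :
    (PhiMat (m := r) (encMat g 0) * M) (emb J hJ a) q
      = ∑ a' : Fin s → Fin n, PhiMat (m := s) g a a' * M (emb J hJ a') q := by
  rw [Matrix.mul_apply]
  rw [sum_emb hJ (fun p => PhiMat (m := r) (encMat g 0) (emb J hJ a) p * M p q)
    (fun p hp => by simp only [phiMat_enc_zero_left (isSupp_emb hJ a) hp g, zero_mul])]
  exact Finset.sum_congr rfl fun a' _ => by rw [phiMat_enc_emb]

lemma key2 {I : Finset (Fin r)} (hI : I.card = s) (g : Matrix (Fin n) (Fin n) ℂ)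
    (M : Matrix (Fin r → Fin (n + 1)) (Fin r → Fin (n + 1)) ℂ)
    (k : Fin r → Fin (n + 1)) (b : Fin s → Fin n) :
    (M * PhiMat (m := r) (encMat g 0)) k (emb I hI b)
      = ∑ b' : Fin s → Fin n, M k (emb I hI b') * PhiMat (m := s) g b' b := by
  rw [Matrix.mul_apply]
  rw [sum_emb hI (fun p => M k p * PhiMat (m := r) (encMat g 0) p (emb I hI b))
    (fun p hp => by simp only [phiMat_enc_zero_right hp (isSupp_emb hI b) g, mul_zero])]
  exact Finset.sum_congr rfl fun b' _ => by rw [phiMat_enc_emb]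

end Aux

/-- Let `G = O(V)` or `Sp(V)` (isometry group of the nondegenerate
symmetric or skew-symmetric form with matrix `Q`) and `I, J ⊆ {1,…,r}` with
`#I = #J = s`.  Then `Hom_G(V̲_I^{⊗r}, V̲_J^{⊗r}) = E_{JI} ∘ B_s^{(I)}(εn)`: every
`G`-module homomorphism `V̲_I^{⊗r} → V̲_J^{⊗r}` (realized as a matrix supported on
`V̲_J`-rows and `V̲_I`-columns commuting with the `G`-action) equals `E_{JI} ∘ σ^I` for a
unique `σ ∈ B_s(εn)`, and conversely every such map is a `G`-homomorphism. -/
theorem hom_eq_EMat_comp_brauer {n r s : ℕ} (Q : Matrix (Fin n) (Fin n) ℂ)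
    (hQ : IsUnit Q) (hform : Qᵀ = Q ∨ Qᵀ = -Q) (I J : Finset (Fin r))
    (hI : I.card = s) (hJ : J.card = s) :
    (∀ M : Matrix (Fin r → Fin (n + 1)) (Fin r → Fin (n + 1)) ℂ,
        (∀ k q, M k q ≠ 0 → isSupp J k ∧ isSupp I q) →
        (∀ g : Matrix (Fin n) (Fin n) ℂ, gᵀ * Q * g = Q →
          PhiMat (m := r) (encMat g 0) * M = M * PhiMat (m := r) (encMat g 0)) →
        ∃! A : Matrix (Fin s → Fin n) (Fin s → Fin n) ℂ,
          A ∈ BrauerSet n s Q ∧ M = EMat (n := n) J I hJ hI * opMat (n := n) I hI A) ∧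
    (∀ A ∈ BrauerSet n s Q,
        (∀ (k q : Fin r → Fin (n + 1)), (EMat (n := n) J I hJ hI * opMat (n := n) I hI A) k q ≠ 0 → isSupp J k ∧ isSupp I q) ∧
        (∀ g : Matrix (Fin n) (Fin n) ℂ, gᵀ * Q * g = Q →
          PhiMat (m := r) (encMat g 0) * (EMat (n := n) J I hJ hI * opMat (n := n) I hI A) =
            (EMat (n := n) J I hJ hI * opMat (n := n) I hI A) * PhiMat (m := r) (encMat g 0))) := by
  constructor
  · intro M hsupp hcomm
    refine ⟨Matrix.of fun a b => M (emb J hJ a) (emb I hI b), ⟨?_, ?_⟩, ?_⟩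
    · -- membership in the Brauer algebra
      intro g hg
      ext a b
      have h := Matrix.ext_iff.mpr (hcomm g hg) (emb J hJ a) (emb I hI b)
      rw [key1 hJ g M a, key2 hI g M] at h
      rw [Matrix.mul_apply, Matrix.mul_apply]
      exact h
    · -- M = EMat * opMat A
      ext k q
      by_cases hk : isSupp J k ∧ isSupp I q
      · obtain ⟨a, rfl⟩ := (isSupp_iff hJ k).mp hk.1
        obtain ⟨b, rfl⟩ := (isSupp_iff hI q).mp hk.2
        rw [mulEO_apply hI hJ, Matrix.of_apply]
      · rw [mulEO_zero hI hJ _ (not_and_or.mp hk)]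
        by_contra h
        exact hk (hsupp k q h)
    · -- uniqueness
      rintro A' ⟨_, hMeq⟩
      ext a b
      have h := Matrix.ext_iff.mpr hMeq (emb J hJ a) (emb I hI b)
      rw [mulEO_apply hI hJ] at h
      exact h.symm
  · intro A hA
    constructor
    · intro k q h
      by_contra hc
      exact h (mulEO_zero hI hJ A (not_and_or.mp hc))
    · intro g hg
      ext k q
      by_cases hq : isSupp I q
      · obtain ⟨b, rfl⟩ := (isSupp_iff hI q).mp hq
        by_cases hk : isSupp J k
        · obtain ⟨a, rfl⟩ := (isSupp_iff hJ k).mp hk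
          rw [key1 hJ g _ a, key2 hI g _ _ b]
          simp only [mulEO_apply hI hJ]
          have h := Matrix.ext_iff.mpr (hA g hg) a b
          rw [Matrix.mul_apply, Matrix.mul_apply] at h
          exact h
        · rw [Matrix.mul_apply, Matrix.mul_apply]
          refine (Finset.sum_eq_zero fun p _ => ?_).trans
            (Finset.sum_eq_zero fun p _ => ?_).symm
          · by_cases hp : isSupp J p
            · simp only [phiMat_enc_zero_right hk hp g, zero_mul]
            · simp only [mulEO_zero hI hJ A (Or.inl hp), mul_zero]
          · simp only [mulEO_zero hI hJ A (Or.inl hk), zero_mul]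
      · rw [Matrix.mul_apply, Matrix.mul_apply]
        refine (Finset.sum_eq_zero fun p _ => ?_).trans
          (Finset.sum_eq_zero fun p _ => ?_).symm
        · simp only [mulEO_zero hI hJ A (Or.inr hq), mul_zero]
        · by_cases hp : isSupp I p
          · simp only [phiMat_enc_zero_left hp hq g, mul_zero]
          · simp only [mulEO_zero hI hJ A (Or.inr hp), zero_mul]

end EnhancedBrauer
end
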